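/- arXiv:1105.2417 — 2 statements merged into one kernel-verified Lean document; each statement's English description precedes it below -/
import Mathlib

section
/- Let T be a uniquely rooted tree, S a strong subtree of T, and F a non-empty finite subset of S. Then the infimum of F computed in S equals the infimum of F computed in T, i.e., ∧_S F = ∧_T F. -/
/-- A tree: a nonempty set in which the set of strict predecessors of every node is
finite and linearly ordered. -/
def IsTreeSet {α : Type*} [PartialOrder α] (T : Set α) : Prop :=
  T.Nonempty ∧ ∀ t ∈ T, {s ∈ T | s < t}.Finite ∧ IsChain (· ≤ ·) {s ∈ T | s < t}

/-- The level of a node `t` in the tree `T`: the number of its strict predecessors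
in `T`. -/
noncomputable def lvl {α : Type*} [PartialOrder α] (T : Set α) (t : α) : ℕ :=
  {s ∈ T | s < t}.ncard

/-- `t` is an immediate successor of `s` in `T`. -/
def ImmSuc {α : Type*} [PartialOrder α] (T : Set α) (s t : α) : Prop :=
  s ∈ T ∧ t ∈ T ∧ s < t ∧ ¬∃ u ∈ T, s < u ∧ u < t

/-- `T` is uniquely rooted. -/
def UniquelyRooted {α : Type*} [PartialOrder α] (T : Set α) : Prop :=
  ∃ r ∈ T, ∀ t ∈ T, r ≤ t

/-- `C` is a maximal chain of `T`. -/
def MaxChainIn {α : Type*} [PartialOrder α] (T C : Set α) : Prop :=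
  C ⊆ T ∧ IsChain (· ≤ ·) C ∧
    ∀ C', C ⊆ C' → C' ⊆ T → IsChain (· ≤ ·) C' → C' = C

/-- `T` is balanced with all maximal chains of cardinality `h`
(i.e. balanced and of height `h`). -/
def BalancedOfHeight {α : Type*} [PartialOrder α] (T : Set α) (h : ℕ) : Prop :=
  ∀ C, MaxChainIn T C → C.Finite ∧ C.ncard = h

/-- Every level of `S` is a subset of some level of `T`. -/
def LevelsAligned {α : Type*} [PartialOrder α] (T S : Set α) : Prop :=
  ∀ s ∈ S, ∀ s' ∈ S, lvl S s = lvl S s' → lvl T s = lvl T s'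

/-- For every non-maximal node `s` of `S` and every immediate successor `t` of `s`
in `T` there is a unique immediate successor `s'` of `s` in `S` with `t ≤ s'`. -/
def SuccCond {α : Type*} [PartialOrder α] (T S : Set α) : Prop :=
  ∀ s ∈ S, (∃ x ∈ S, s < x) → ∀ t, ImmSuc T s t → ∃! s', ImmSuc S s s' ∧ t ≤ s'

/-- `S` is a strong subtree of `T` of (finite) height `h`. -/
def IsStrongSubtreeFin {α : Type*} [PartialOrder α] (T S : Set α) (h : ℕ) : Prop :=
  S ⊆ T ∧ S.Nonempty ∧ UniquelyRooted S ∧ BalancedOfHeight S h ∧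
    LevelsAligned T S ∧ SuccCond T S

/-- `S` is a strong subtree of `T` of infinite height. -/
def IsStrongSubtreeInf {α : Type*} [PartialOrder α] (T S : Set α) : Prop :=
  S ⊆ T ∧ S.Nonempty ∧ UniquelyRooted S ∧ (∀ s ∈ S, ∃ x ∈ S, s < x) ∧
    LevelsAligned T S ∧ SuccCond T S

/-- `w` is the infimum of `F` in `T`: a maximal node of `T` lying below every
element of `F`. -/
def IsInfOf {α : Type*} [PartialOrder α] (T F : Set α) (w : α) : Prop :=
  w ∈ T ∧ (∀ t ∈ F, w ≤ t) ∧ ∀ u ∈ T, (∀ t ∈ F, u ≤ t) → ¬w < u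

lemma exists_chain_min {α : Type*} [PartialOrder α] {A : Set α} (hfin : A.Finite)
    (hne : A.Nonempty) (hch : IsChain (· ≤ ·) A) : ∃ a ∈ A, ∀ b ∈ A, a ≤ b := by
  obtain ⟨a, haA, hmin⟩ : ∃ a ∈ A, ∀ b ∈ A, id b ≤ id a → id a = id b := by
    obtain ⟨a, ha⟩ := hfin.exists_minimal hne
    exact ⟨a, ha.1, fun b hb h => le_antisymm (ha.2 hb h) h⟩
  refine ⟨a, haA, fun b hb => ?_⟩
  rcases eq_or_ne a b with rfl | hne'
  · exact le_refl _
  · rcases hch haA hb hne' with h | h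
    · exact h
    · exact (hmin b hb h).le

theorem stmt7 {α : Type*} [PartialOrder α] (T S : Set α)
    (hT : IsTreeSet T) (hroot : UniquelyRooted T)
    (hS : IsStrongSubtreeInf T S ∨ ∃ h, IsStrongSubtreeFin T S h)
    (F : Set α) (hFS : F ⊆ S) (hFne : F.Nonempty) (hFfin : F.Finite)
    (w v : α) (hw : IsInfOf S F w) (hv : IsInfOf T F v) : w = v := by
  have hSsub : S ⊆ T := by rcases hS with h | ⟨h, hh⟩; exacts [h.1, hh.1]
  have hSucc : SuccCond T S := by
    rcases hS with h | ⟨h, hh⟩; exacts [h.2.2.2.2.2, hh.2.2.2.2.2]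
  obtain ⟨t₀, ht₀F⟩ := hFne
  have hwS : w ∈ S := hw.1
  have hvT : v ∈ T := hv.1
  have hwT : w ∈ T := hSsub hwS
  have hnotvw : ¬ v < w := hv.2.2 w hwT hw.2.1
  have hnotwv : ¬ w < v := by
    intro hwv
    set A := {u ∈ T | w < u ∧ u ≤ v} with hAdef
    have hAfin : A.Finite := by
      apply ((hT.2 v hvT).1.union (Set.finite_singleton v)).subset
      rintro u ⟨huT, _, huv⟩
      rcases eq_or_lt_of_le huv with rfl | h
      · exact Or.inr rfl
      · exact Or.inl ⟨huT, h⟩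
    have hAch : IsChain (· ≤ ·) A := by
      intro a ha b hb hne
      rcases eq_or_lt_of_le ha.2.2 with rfl | ha'
      · exact Or.inr hb.2.2
      rcases eq_or_lt_of_le hb.2.2 with rfl | hb'
      · exact Or.inl ha.2.2
      exact (hT.2 v hvT).2 ⟨ha.1, ha'⟩ ⟨hb.1, hb'⟩ hne
    obtain ⟨t, htA, htmin⟩ := exists_chain_min hAfin ⟨v, hvT, hwv, le_refl v⟩ hAch
    have htImm : ImmSuc T w t := by
      refine ⟨hwT, htA.1, htA.2.1, ?_⟩
      rintro ⟨u, huT, hwu, hut⟩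
      exact absurd (htmin u ⟨huT, hwu, hut.le.trans htA.2.2⟩) (not_le_of_gt hut)
    have hwlt : ∀ t' ∈ F, w < t' := fun t' ht' => lt_of_lt_of_le hwv (hv.2.1 t' ht')
    obtain ⟨s', ⟨hs'Imm, hts'⟩, huniq⟩ :=
      hSucc w hwS ⟨t₀, hFS ht₀F, hwlt t₀ ht₀F⟩ t htImm
    have hs'le : ∀ t' ∈ F, s' ≤ t' := by
      intro t' ht'
      have ht'S : t' ∈ S := hFS ht'
      have ht'T : t' ∈ T := hSsub ht'S
      set B := {u ∈ S | w < u ∧ u ≤ t'} with hBdef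
      have hBfin : B.Finite := by
        apply ((hT.2 t' ht'T).1.union (Set.finite_singleton t')).subset
        rintro u ⟨huS, _, hut'⟩
        rcases eq_or_lt_of_le hut' with rfl | h
        · exact Or.inr rfl
        · exact Or.inl ⟨hSsub huS, h⟩
      have hBch : IsChain (· ≤ ·) B := by
        intro a ha b hb hne
        rcases eq_or_lt_of_le ha.2.2 with rfl | ha'
        · exact Or.inr hb.2.2
        rcases eq_or_lt_of_le hb.2.2 with rfl | hb'
        · exact Or.inl ha.2.2
        exact (hT.2 t' ht'T).2 ⟨hSsub ha.1, ha'⟩ ⟨hSsub hb.1, hb'⟩ hne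
      obtain ⟨s₁, hs₁B, hs₁min⟩ :=
        exists_chain_min hBfin ⟨t', ht'S, hwlt t' ht', le_refl t'⟩ hBch
      have hs₁Imm : ImmSuc S w s₁ := by
        refine ⟨hwS, hs₁B.1, hs₁B.2.1, ?_⟩
        rintro ⟨u, huS, hwu, hus₁⟩
        exact absurd (hs₁min u ⟨huS, hwu, hus₁.le.trans hs₁B.2.2⟩) (not_le_of_gt hus₁)
      have htt' : t ≤ t' := htA.2.2.trans (hv.2.1 t' ht')
      have hcomp : s₁ ≤ t ∨ t ≤ s₁ := by
        rcases eq_or_lt_of_le hs₁B.2.2 with rfl | hs₁lt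
        · exact Or.inr htt'
        rcases eq_or_lt_of_le htt' with rfl | htlt
        · exact Or.inl hs₁lt.le
        rcases eq_or_ne s₁ t with rfl | hne'
        · exact Or.inl (le_refl _)
        · exact (hT.2 t' ht'T).2 ⟨hSsub hs₁B.1, hs₁lt⟩ ⟨htImm.2.1, htlt⟩ hne'
      have hts₁ : t ≤ s₁ := by
        rcases hcomp with h | h
        · rcases eq_or_lt_of_le h with rfl | h'
          · exact le_refl _
          · exact absurd ⟨s₁, hSsub hs₁B.1, hs₁B.2.1, h'⟩ htImm.2.2.2
        · exact h
      have : s₁ = s' := huniq s₁ ⟨hs₁Imm, hts₁⟩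
      exact this ▸ hs₁B.2.2
    exact hw.2.2 s' hs'Imm.2.1 hs'le hs'Imm.2.2.1
  by_contra hne
  have hwt₀ : w ≤ t₀ := hw.2.1 t₀ ht₀F
  have hvt₀ : v ≤ t₀ := hv.2.1 t₀ ht₀F
  rcases eq_or_lt_of_le hwt₀ with rfl | hw'
  · exact hne (((eq_or_lt_of_le hvt₀).resolve_right hnotvw).symm)
  rcases eq_or_lt_of_le hvt₀ with rfl | hv'
  · exact hne ((eq_or_lt_of_le hwt₀).resolve_right hnotwv)
  rcases (hT.2 t₀ (hSsub (hFS ht₀F))).2 ⟨hwT, hw'⟩ ⟨hvT, hv'⟩ hne with h | h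
  · exact hnotwv (lt_of_le_of_ne h hne)
  · exact hnotvw (lt_of_le_of_ne h (Ne.symm hne))
end

section
/- For every integer k ≥ 1, every uniquely rooted and balanced tree T of height k, and every non-empty finite subset F of T, there exists a strong subtree S of T with height h(S) ≤ min{k, 2|F| − 1} such that F ⊆ S. -/
namespace StrongTreeAux

variable {α : Type*} [PartialOrder α]

lemma pred_subset_pred {T : Set α} {s t : α} (hst : s ≤ t) :
    {x ∈ T | x < s} ⊆ {x ∈ T | x < t} :=
  fun x hx => ⟨hx.1, lt_of_lt_of_le hx.2 hst⟩

lemma lvl_lt_lvl {T : Set α} (hT : IsTreeSet T) {s t : α} (hs : s ∈ T) (ht : t ∈ T)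
    (hst : s < t) : lvl T s < lvl T t := by
  refine Set.ncard_lt_ncard ⟨pred_subset_pred hst.le, fun hsub => ?_⟩ (hT.2 t ht).1
  exact absurd (hsub ⟨hs, hst⟩).2 (lt_irrefl s)

lemma lvl_le_lvl {T : Set α} (hT : IsTreeSet T) {s t : α} (hs : s ∈ T) (ht : t ∈ T)
    (hst : s ≤ t) : lvl T s ≤ lvl T t := by
  rcases eq_or_lt_of_le hst with rfl | h
  · exact le_rfl
  · exact (lvl_lt_lvl hT hs ht h).le

lemma eq_of_le_of_lvl_le {T : Set α} (hT : IsTreeSet T) {s t : α} (hs : s ∈ T) (ht : t ∈ T)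
    (hst : s ≤ t) (hlvl : lvl T t ≤ lvl T s) : s = t := by
  rcases eq_or_lt_of_le hst with rfl | h
  · rfl
  · exact absurd (lvl_lt_lvl hT hs ht h) (not_lt.mpr hlvl)

lemma comparable_of_le_le {T : Set α} (hT : IsTreeSet T) {u v s : α} (hu : u ∈ T) (hv : v ∈ T)
    (hs : s ∈ T) (hus : u ≤ s) (hvs : v ≤ s) : u ≤ v ∨ v ≤ u := by
  by_cases huv : u = v
  · exact Or.inl huv.le
  rcases eq_or_lt_of_le hus with rfl | hus'
  · exact Or.inr hvs
  rcases eq_or_lt_of_le hvs with rfl | hvs'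
  · exact Or.inl hus'.le
  exact (hT.2 s hs).2 ⟨hu, hus'⟩ ⟨hv, hvs'⟩ huv

lemma uniq_at_lvl {T : Set α} (hT : IsTreeSet T) {u v w : α} (hu : u ∈ T) (hv : v ∈ T)
    (hw : w ∈ T) (huw : u ≤ w) (hvw : v ≤ w) (hlvl : lvl T u = lvl T v) : u = v := by
  rcases comparable_of_le_le hT hu hv hw huw hvw with h | h
  · exact eq_of_le_of_lvl_le hT hu hv h hlvl.ge
  · exact (eq_of_le_of_lvl_le hT hv hu h hlvl.le).symm

lemma chain_max {s : Set α} (hfin : s.Finite) (hne : s.Nonempty)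
    (hchain : IsChain (· ≤ ·) s) : ∃ m ∈ s, ∀ x ∈ s, x ≤ m := by
  obtain ⟨m, hm, hmax⟩ : ∃ m ∈ s, ∀ x ∈ s, id m ≤ id x → id m = id x := by
    obtain ⟨m, hm, hmax⟩ := Set.Finite.exists_maximalFor id s hfin hne
    exact ⟨m, hm, fun x hx h => le_antisymm h (hmax hx h)⟩
  refine ⟨m, hm, fun x hx => ?_⟩
  by_cases hxm : x = m
  · exact hxm.le
  rcases hchain hm hx (fun h => hxm h.symm) with h | h
  · exact (hmax x hx h).ge
  · exact h

lemma chain_min {s : Set α} (hfin : s.Finite) (hne : s.Nonempty)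
    (hchain : IsChain (· ≤ ·) s) : ∃ m ∈ s, ∀ x ∈ s, m ≤ x := by
  obtain ⟨m, hm, hmax⟩ : ∃ m ∈ s, ∀ x ∈ s, OrderDual.toDual m ≤ OrderDual.toDual x →
      OrderDual.toDual m = OrderDual.toDual x := by
    obtain ⟨m, hm, hmax⟩ := Set.Finite.exists_maximalFor (OrderDual.toDual) s hfin hne
    exact ⟨m, hm, fun x hx h => le_antisymm h (hmax hx h)⟩
  refine ⟨m, hm, fun x hx => ?_⟩
  by_cases hxm : x = m
  · exact hxm.ge
  rcases hchain hm hx (fun h => hxm h.symm) with h | h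
  · exact h
  · exact le_of_eq (hmax x hx h)

lemma below_finite {T : Set α} (hT : IsTreeSet T) {t : α} (ht : t ∈ T) :
    {x ∈ T | x ≤ t}.Finite := by
  refine ((hT.2 t ht).1.insert t).subset (fun x hx => ?_)
  rcases eq_or_lt_of_le hx.2 with rfl | h
  · exact Set.mem_insert _ _
  · exact Set.mem_insert_of_mem _ ⟨hx.1, h⟩

lemma below_chain {T : Set α} (hT : IsTreeSet T) {t : α} (ht : t ∈ T) :
    IsChain (· ≤ ·) {x ∈ T | x ≤ t} := fun u hu v hv _ =>
  comparable_of_le_le hT hu.1 hv.1 ht hu.2 hv.2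

lemma exists_le_lvl {T : Set α} (hT : IsTreeSet T) {t : α} (ht : t ∈ T) {j : ℕ}
    (hj : j ≤ lvl T t) : ∃ u, u ∈ T ∧ u ≤ t ∧ lvl T u = j := by
  classical
  set D := {x ∈ T | x ≤ t} with hD
  have hDfin : D.Finite := below_finite hT ht
  have hDchain : IsChain (· ≤ ·) D := below_chain hT ht
  have hDne : D.Nonempty := ⟨t, ht, le_rfl⟩
  -- the minimum of D has level 0
  obtain ⟨m₀, hm₀D, hm₀min⟩ := chain_min hDfin hDne hDchain
  have hm₀lvl : lvl T m₀ = 0 := by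
    have : {x ∈ T | x < m₀} = ∅ := by
      ext x
      simp only [Set.mem_setOf_eq, Set.mem_empty_iff_false, iff_false, not_and]
      intro hx hlt
      exact absurd (hlt.trans_le (hm₀min x ⟨hx, hlt.le.trans hm₀D.2⟩)) (lt_irrefl x)
    simp [lvl, this]
  set A := {x ∈ D | lvl T x ≤ j} with hA
  have hAfin : A.Finite := hDfin.subset (fun x hx => hx.1)
  have hAne : A.Nonempty := ⟨m₀, hm₀D, by simp [hm₀lvl]⟩
  obtain ⟨u, huA, humax⟩ : ∃ u ∈ A, ∀ x ∈ A, lvl T u ≤ lvl T x → lvl T u = lvl T x := by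
    obtain ⟨u, huA, humax⟩ := Set.Finite.exists_maximalFor (lvl T) A hAfin hAne
    exact ⟨u, huA, fun x hx h => le_antisymm h (humax hx h)⟩
  have huT : u ∈ T := huA.1.1
  have hut : u ≤ t := huA.1.2
  rcases eq_or_lt_of_le huA.2 with hj' | hj'
  · exact ⟨u, huT, hut, hj'⟩
  exfalso
  -- u < t since lvl u < j ≤ lvl t
  have hune : u ≠ t := by
    intro h; rw [h] at hj'; exact absurd hj (not_le.mpr hj')
  have hut' : u < t := lt_of_le_of_ne hut hune
  set B := {x ∈ D | u < x} with hB
  have hBfin : B.Finite := hDfin.subset (fun x hx => hx.1)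
  have hBne : B.Nonempty := ⟨t, ⟨ht, le_rfl⟩, hut'⟩
  have hBchain : IsChain (· ≤ ·) B := fun x hx y hy hne => hDchain hx.1 hy.1 hne
  obtain ⟨v, hvB, hvmin⟩ := chain_min hBfin hBne hBchain
  have hpred : {x ∈ T | x < v} = insert u {x ∈ T | x < u} := by
    ext x
    simp only [Set.mem_setOf_eq, Set.mem_insert_iff]
    constructor
    · rintro ⟨hxT, hxv⟩
      have hxD : x ∈ D := ⟨hxT, hxv.le.trans hvB.1.2⟩
      by_cases hxu : x = u
      · exact Or.inl hxu
      rcases hDchain hxD huA.1 hxu with h | h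
      · exact Or.inr ⟨hxT, lt_of_le_of_ne h hxu⟩
      · exact absurd (hxv.trans_le (hvmin x ⟨hxD, lt_of_le_of_ne h (fun hh => hxu hh.symm)⟩))
          (lt_irrefl x)
    · rintro (rfl | ⟨hxT, hxu⟩)
      · exact ⟨huT, hvB.2⟩
      · exact ⟨hxT, hxu.trans hvB.2⟩
  have hvlvl : lvl T v = lvl T u + 1 := by
    rw [lvl, hpred, Set.ncard_insert_of_notMem (by simp) ((hT.2 u huT).1)]
    rfl
  have hvA : v ∈ A := ⟨hvB.1, by omega⟩
  have := humax v hvA (by omega)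
  omega

open Classical in
noncomputable def proj (T : Set α) (z : α) (j : ℕ) : α :=
  if h : ∃ u, u ∈ T ∧ u ≤ z ∧ lvl T u = j then h.choose else z

lemma proj_spec {T : Set α} (hT : IsTreeSet T) {z : α} (hz : z ∈ T) {j : ℕ}
    (hj : j ≤ lvl T z) : proj T z j ∈ T ∧ proj T z j ≤ z ∧ lvl T (proj T z j) = j := by
  have h := exists_le_lvl hT hz hj
  rw [proj, dif_pos h]
  exact h.choose_spec

lemma eq_proj {T : Set α} (hT : IsTreeSet T) {z u : α} (hz : z ∈ T) (hu : u ∈ T)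
    (huz : u ≤ z) {j : ℕ} (hlvl : lvl T u = j) : u = proj T z j := by
  have hj : j ≤ lvl T z := hlvl ▸ lvl_le_lvl hT hu hz huz
  obtain ⟨h1, h2, h3⟩ := proj_spec hT hz hj
  exact uniq_at_lvl hT hu h1 hz huz h2 (by rw [hlvl, h3])

lemma exists_maxChainIn {T D : Set α} (hDT : D ⊆ T) (hD : IsChain (· ≤ ·) D) :
    ∃ C, MaxChainIn T C ∧ D ⊆ C := by
  have hzorn : ∀ c ⊆ {C | C ⊆ T ∧ IsChain (· ≤ ·) C ∧ D ⊆ C}, IsChain (· ⊆ ·) c →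
      c.Nonempty → ∃ ub ∈ {C | C ⊆ T ∧ IsChain (· ≤ ·) C ∧ D ⊆ C}, ∀ s ∈ c, s ⊆ ub := by
    intro c hcS hcchain hcne
    refine ⟨⋃₀ c, ⟨?_, ?_, ?_⟩, fun s hs => Set.subset_sUnion_of_mem hs⟩
    · exact Set.sUnion_subset (fun s hs => (hcS hs).1)
    · intro x hx y hy hxy
      obtain ⟨s, hs, hxs⟩ := hx
      obtain ⟨t, ht, hyt⟩ := hy
      rcases eq_or_ne s t with rfl | hst
      · exact (hcS hs).2.1 hxs hyt hxy
      rcases hcchain hs ht hst with h | h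
      · exact (hcS ht).2.1 (h hxs) hyt hxy
      · exact (hcS hs).2.1 hxs (h hyt) hxy
    · obtain ⟨s, hs⟩ := hcne
      exact (hcS hs).2.2.trans (Set.subset_sUnion_of_mem hs)
  obtain ⟨C, hDC, hCmem, hCmax⟩ :=
    zorn_subset_nonempty {C | C ⊆ T ∧ IsChain (· ≤ ·) C ∧ D ⊆ C} hzorn D ⟨hDT, hD, subset_rfl⟩
  refine ⟨C, ⟨hCmem.1, hCmem.2.1, fun C' hCC' hC'T hC' => ?_⟩, hCmem.2.2⟩
  exact (hCmax ⟨hC'T, hC', hCmem.2.2.trans hCC'⟩ hCC').antisymm hCC'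

lemma maxChain_pred_subset {T C : Set α} (hT : IsTreeSet T) (hC : MaxChainIn T C) {u : α}
    (hu : u ∈ C) : {x ∈ T | x < u} ⊆ C := by
  have huT : u ∈ T := hC.1 hu
  set C' := C ∪ {x ∈ T | x < u} with hC'
  have hchain : IsChain (· ≤ ·) C' := by
    intro x hx y hy hxy
    rcases hx with hx | hx <;> rcases hy with hy | hy
    · exact hC.2.1 hx hy hxy
    · -- x ∈ C, y < u
      rcases eq_or_ne x u with rfl | hxu
      · exact Or.inr hy.2.le
      rcases hC.2.1 hx hu hxu with h | h
      · exact comparable_of_le_le hT (hC.1 hx) hy.1 huT h hy.2.le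
      · exact Or.inr (hy.2.le.trans h)
    · rcases eq_or_ne y u with rfl | hyu
      · exact Or.inl hx.2.le
      rcases hC.2.1 hy hu hyu with h | h
      · exact comparable_of_le_le hT hx.1 (hC.1 hy) huT hx.2.le h
      · exact Or.inl (hx.2.le.trans h)
    · exact comparable_of_le_le hT hx.1 hy.1 huT hx.2.le hy.2.le
  have : C' = C := hC.2.2 C' Set.subset_union_left
    (Set.union_subset hC.1 (fun x hx => hx.1)) hchain
  rw [← this]
  exact Set.subset_union_right

lemma maxChain_facts {T C : Set α} {k : ℕ} (hT : IsTreeSet T) (hbal : BalancedOfHeight T k)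
    (hC : MaxChainIn T C) :
    (∀ u ∈ C, lvl T u < k) ∧ (∀ j < k, ∃ u ∈ C, lvl T u = j) := by
  obtain ⟨hfin, hcard⟩ := hbal C hC
  have hlt : ∀ u ∈ C, lvl T u < k := by
    intro u hu
    have h1 : {x ∈ T | x < u} ⊆ C \ {u} := fun x hx =>
      ⟨maxChain_pred_subset hT hC hu hx, fun hxu => absurd hx.2 (by simp [Set.mem_singleton_iff.mp hxu])⟩
    have h2 : (C \ {u}).ncard < C.ncard := Set.ncard_lt_ncard (by
      refine ⟨Set.diff_subset, fun hsub => ?_⟩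
      exact absurd (hsub hu).2 (by simp)) hfin
    calc lvl T u ≤ (C \ {u}).ncard := Set.ncard_le_ncard h1 (hfin.subset Set.diff_subset)
    _ < k := by rw [← hcard]; exact h2
  refine ⟨hlt, ?_⟩
  have hinj : Set.InjOn (lvl T) C := by
    intro x hx y hy hxy
    rcases eq_or_ne x y with rfl | hne
    · rfl
    rcases hC.2.1 hx hy hne with h | h
    · exact eq_of_le_of_lvl_le hT (hC.1 hx) (hC.1 hy) h hxy.ge
    · exact (eq_of_le_of_lvl_le hT (hC.1 hy) (hC.1 hx) h hxy.le).symm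
  have hsub : lvl T '' C ⊆ ↑(Finset.range k) := by
    rintro j ⟨u, hu, rfl⟩
    simp [hlt u hu]
  have heq : lvl T '' C = ↑(Finset.range k) := by
    refine Set.eq_of_subset_of_ncard_le hsub ?_ ((Finset.range k).finite_toSet)
    rw [Set.ncard_image_of_injOn hinj, hcard, Set.ncard_coe_finset, Finset.card_range]
  intro j hj
  have : j ∈ lvl T '' C := by rw [heq]; simp [hj]
  obtain ⟨u, hu, rfl⟩ := this
  exact ⟨u, hu, rfl⟩

lemma lvl_lt_height {T : Set α} {k : ℕ} (hT : IsTreeSet T) (hbal : BalancedOfHeight T k)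
    {t : α} (ht : t ∈ T) : lvl T t < k := by
  obtain ⟨C, hC, hsub⟩ := exists_maxChainIn (Set.singleton_subset_iff.mpr ht)
    (Set.subsingleton_singleton.isChain)
  exact (maxChain_facts hT hbal hC).1 t (hsub rfl)

lemma exists_ge_lvl {T : Set α} {k : ℕ} (hT : IsTreeSet T) (hbal : BalancedOfHeight T k)
    {t : α} (ht : t ∈ T) {j : ℕ} (h1 : lvl T t ≤ j) (h2 : j < k) :
    ∃ u, u ∈ T ∧ t ≤ u ∧ lvl T u = j := by
  obtain ⟨C, hC, hsub⟩ := exists_maxChainIn (Set.singleton_subset_iff.mpr ht)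
    (Set.subsingleton_singleton.isChain)
  obtain ⟨u, hu, hulvl⟩ := (maxChain_facts hT hbal hC).2 j h2
  have htC : t ∈ C := hsub rfl
  refine ⟨u, hC.1 hu, ?_, hulvl⟩
  rcases eq_or_ne t u with rfl | hne
  · exact le_rfl
  rcases hC.2.1 htC hu hne with h | h
  · exact h
  · exact (eq_of_le_of_lvl_le hT (hC.1 hu) (hC.1 htC) h (by omega)).symm.le

open Classical in
noncomputable def tmeet (T : Set α) (x y : α) : α :=
  if h : ∃ m, (m ∈ T ∧ m ≤ x ∧ m ≤ y) ∧ ∀ z ∈ T, z ≤ x → z ≤ y → z ≤ m then h.choose else x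

lemma tmeet_spec {T : Set α} (hT : IsTreeSet T) (hroot : UniquelyRooted T) {x y : α}
    (hx : x ∈ T) (hy : y ∈ T) :
    tmeet T x y ∈ T ∧ tmeet T x y ≤ x ∧ tmeet T x y ≤ y ∧
      ∀ z ∈ T, z ≤ x → z ≤ y → z ≤ tmeet T x y := by
  have h : ∃ m, (m ∈ T ∧ m ≤ x ∧ m ≤ y) ∧ ∀ z ∈ T, z ≤ x → z ≤ y → z ≤ m := by
    set L := {z ∈ T | z ≤ x ∧ z ≤ y} with hL
    have hLfin : L.Finite := (below_finite hT hx).subset (fun z hz => ⟨hz.1, hz.2.1⟩)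
    obtain ⟨r, hr, hrmin⟩ := hroot
    have hLne : L.Nonempty := ⟨r, hr, hrmin x hx, hrmin y hy⟩
    have hLchain : IsChain (· ≤ ·) L := fun u hu v hv _ =>
      comparable_of_le_le hT hu.1 hv.1 hx hu.2.1 hv.2.1
    obtain ⟨m, hm, hmmax⟩ := chain_max hLfin hLne hLchain
    exact ⟨m, ⟨hm.1, hm.2.1, hm.2.2⟩, fun z hz h1 h2 => hmmax z ⟨hz, h1, h2⟩⟩
  rw [tmeet, dif_pos h]
  obtain ⟨⟨h1, h2, h3⟩, h4⟩ := h.choose_spec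
  exact ⟨h1, h2, h3, h4⟩

lemma tmeet_self {T : Set α} (hT : IsTreeSet T) (hroot : UniquelyRooted T) {x : α}
    (hx : x ∈ T) : tmeet T x x = x := by
  obtain ⟨h1, h2, _, h4⟩ := tmeet_spec hT hroot hx hx
  exact le_antisymm h2 (h4 x hx le_rfl le_rfl)

lemma tmeet_comm {T : Set α} (hT : IsTreeSet T) (hroot : UniquelyRooted T) {x y : α}
    (hx : x ∈ T) (hy : y ∈ T) : tmeet T x y = tmeet T y x := by
  obtain ⟨h1, h2, h3, h4⟩ := tmeet_spec hT hroot hx hy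
  obtain ⟨g1, g2, g3, g4⟩ := tmeet_spec hT hroot hy hx
  exact le_antisymm (g4 _ h1 h3 h2) (h4 _ g1 g3 g2)

lemma immSuc_lvl {T : Set α} (hT : IsTreeSet T) {s t : α} (h : ImmSuc T s t) :
    lvl T t = lvl T s + 1 := by
  obtain ⟨hs, ht, hst, hno⟩ := h
  have h1 : lvl T s + 1 ≤ lvl T t := lvl_lt_lvl hT hs ht hst
  rcases eq_or_lt_of_le h1 with h2 | h2
  · exact h2.symm
  exfalso
  obtain ⟨u, huT, hut, hulvl⟩ := exists_le_lvl hT ht (le_of_lt h2)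
  have hsu : s < u := by
    have : s ≤ u ∨ u ≤ s := comparable_of_le_le hT hs huT ht hst.le hut
    rcases this with h3 | h3
    · exact lt_of_le_of_ne h3 (fun hh => by rw [hh] at hulvl; omega)
    · exfalso
      have := lvl_le_lvl hT huT hs h3
      omega
  have hune : u ≠ t := fun hh => by rw [hh] at hulvl; omega
  exact hno ⟨u, huT, hsu, lt_of_le_of_ne hut hune⟩

lemma immSuc_of_lvl {T : Set α} (hT : IsTreeSet T) {s t : α} (hs : s ∈ T) (ht : t ∈ T)
    (hst : s < t) (hlvl : lvl T t = lvl T s + 1) : ImmSuc T s t := by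
  refine ⟨hs, ht, hst, ?_⟩
  rintro ⟨u, huT, hsu, hut⟩
  have h1 := lvl_lt_lvl hT hs huT hsu
  have h2 := lvl_lt_lvl hT huT ht hut
  omega


open Classical in
noncomputable def pick (T F' : Set α) (q : ℕ) (t : α) : α :=
  if h : ∃ z, z ∈ F' ∧ t ≤ z ∧ q ≤ lvl T z then proj T h.choose q
  else if h2 : ∃ u, u ∈ T ∧ t ≤ u ∧ lvl T u = q then h2.choose else t

structure Ctx (α : Type*) [PartialOrder α] where
  T : Set α
  k : ℕ
  F' : Set α
  m₀ : α
  n : ℕ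
  ℓ : ℕ → ℕ
  hT : IsTreeSet T
  hroot : UniquelyRooted T
  hbal : BalancedOfHeight T k
  hFT : F' ⊆ T
  hm₀ : m₀ ∈ F'
  hm₀min : ∀ z ∈ F', m₀ ≤ z
  hclos : ∀ z₁ ∈ F', ∀ z₂ ∈ F', tmeet T z₁ z₂ ∈ F'
  hn : 0 < n
  hmono : ∀ i j, i < j → j < n → ℓ i < ℓ j
  hlvl : ∀ i < n, ∃ z ∈ F', lvl T z = ℓ i
  hlvl' : ∀ z ∈ F', ∃ i < n, ℓ i = lvl T z

namespace Ctx

variable (c : Ctx α)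

lemma mono_le {i j : ℕ} (hij : i ≤ j) (hj : j < c.n) : c.ℓ i ≤ c.ℓ j := by
  rcases eq_or_lt_of_le hij with rfl | h
  · exact le_rfl
  · exact (c.hmono i j h hj).le

lemma idx_lt {i j : ℕ} (hi : i < c.n) (hj : j < c.n) (h : c.ℓ i < c.ℓ j) : i < j := by
  by_contra hc
  exact absurd (c.mono_le (not_lt.mp hc) hi) (not_le.mpr h)

lemma idx_inj {i j : ℕ} (hi : i < c.n) (hj : j < c.n) (h : c.ℓ i = c.ℓ j) : i = j := by
  rcases lt_trichotomy i j with h' | h' | h'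
  · exact absurd h (c.hmono i j h' hj).ne
  · exact h'
  · exact absurd h.symm (c.hmono j i h' hi).ne

lemma l_lt_k {i : ℕ} (hi : i < c.n) : c.ℓ i < c.k := by
  obtain ⟨z, hz, hzl⟩ := c.hlvl i hi
  exact hzl ▸ lvl_lt_height c.hT c.hbal (c.hFT hz)

lemma l0 : c.ℓ 0 = lvl c.T c.m₀ := by
  obtain ⟨i, hi, hil⟩ := c.hlvl' c.m₀ c.hm₀
  obtain ⟨z, hz, hzl⟩ := c.hlvl 0 c.hn
  have h1 : lvl c.T c.m₀ ≤ c.ℓ 0 :=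
    hzl ▸ lvl_le_lvl c.hT (c.hFT c.hm₀) (c.hFT hz) (c.hm₀min z hz)
  have h2 : c.ℓ 0 ≤ lvl c.T c.m₀ := hil ▸ c.mono_le (Nat.zero_le i) hi
  omega

lemma lvl_gap {i : ℕ} (hi : i + 1 < c.n) {z : α} (hz : z ∈ c.F')
    (h : c.ℓ i < lvl c.T z) : c.ℓ (i + 1) ≤ lvl c.T z := by
  obtain ⟨j, hj, hjl⟩ := c.hlvl' z hz
  have hij : i < j := c.idx_lt (Nat.lt_of_succ_lt hi) hj (hjl ▸ h)
  exact hjl ▸ c.mono_le hij hj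

lemma pick_spec {t : α} {q : ℕ} (ht : t ∈ c.T) (h1 : lvl c.T t ≤ q) (h2 : q < c.k) :
    pick c.T c.F' q t ∈ c.T ∧ t ≤ pick c.T c.F' q t ∧ lvl c.T (pick c.T c.F' q t) = q := by
  rw [pick]
  by_cases h : ∃ z, z ∈ c.F' ∧ t ≤ z ∧ q ≤ lvl c.T z
  · rw [dif_pos h]
    obtain ⟨hz1, hz2, hz3⟩ := h.choose_spec
    have hzT : h.choose ∈ c.T := c.hFT hz1
    obtain ⟨hp1, hp2, hp3⟩ := proj_spec c.hT hzT hz3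
    refine ⟨hp1, ?_, hp3⟩
    rcases comparable_of_le_le c.hT ht hp1 hzT hz2 hp2 with h' | h'
    · exact h'
    · exact (eq_of_le_of_lvl_le c.hT hp1 ht h' (by omega)).symm.le
  · rw [dif_neg h]
    have h2' := exists_ge_lvl c.hT c.hbal ht h1 h2
    rw [dif_pos h2']
    exact h2'.choose_spec

lemma pick_eq_proj {i : ℕ} (hi : i + 1 < c.n) {t z : α} (ht : t ∈ c.T)
    (hlvlt : lvl c.T t = c.ℓ i + 1) (hz : z ∈ c.F') (htz : t ≤ z)
    (hzl : c.ℓ (i + 1) ≤ lvl c.T z) :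
    pick c.T c.F' (c.ℓ (i + 1)) t = proj c.T z (c.ℓ (i + 1)) := by
  have h : ∃ z', z' ∈ c.F' ∧ t ≤ z' ∧ c.ℓ (i + 1) ≤ lvl c.T z' := ⟨z, hz, htz, hzl⟩
  rw [pick, dif_pos h]
  obtain ⟨hz'1, hz'2, hz'3⟩ := h.choose_spec
  set z' := h.choose with hz'def
  obtain ⟨hw1, hw2, hw3, hw4⟩ := tmeet_spec c.hT c.hroot (c.hFT hz) (c.hFT hz'1)
  set w := tmeet c.T z z' with hwdef
  have hwF : w ∈ c.F' := c.hclos z hz z' hz'1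
  have htw : t ≤ w := hw4 t ht htz hz'2
  have hlw : c.ℓ (i + 1) ≤ lvl c.T w := by
    refine c.lvl_gap hi hwF ?_
    have := lvl_le_lvl c.hT ht hw1 htw
    omega
  obtain ⟨hp1, hp2, hp3⟩ := proj_spec c.hT (c.hFT hz'1) hz'3
  set p := proj c.T z' (c.ℓ (i + 1)) with hpdef
  have hpw : p ≤ w := by
    rcases comparable_of_le_le c.hT hp1 hw1 (c.hFT hz'1) hp2 hw3 with h' | h'
    · exact h'
    · exact (eq_of_le_of_lvl_le c.hT hw1 hp1 h' (by omega)).ge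
  have hpz : p ≤ z := hpw.trans hw2
  exact eq_proj c.hT (c.hFT hz) hp1 hpz hp3

end Ctx

def Slev (c : Ctx α) : ℕ → Set α
  | 0 => {c.m₀}
  | i + 1 => {x | ∃ s ∈ Slev c i, ∃ t, ImmSuc c.T s t ∧ x = pick c.T c.F' (c.ℓ (i + 1)) t}

namespace Ctx

lemma slev_basic (c : Ctx α) : ∀ i, i < c.n → ∀ x ∈ Slev c i,
    x ∈ c.T ∧ lvl c.T x = c.ℓ i ∧ c.m₀ ≤ x := by
  intro i
  induction i with
  | zero =>
    intro _ x hx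
    rcases hx with rfl
    exact ⟨c.hFT c.hm₀, c.l0.symm, le_rfl⟩
  | succ i ih =>
    intro hi x hx
    obtain ⟨s, hs, t, hts, rfl⟩ := hx
    obtain ⟨hsT, hslvl, hm₀s⟩ := ih (Nat.lt_of_succ_lt hi) s hs
    have htT : t ∈ c.T := hts.2.1
    have htlvl : lvl c.T t = c.ℓ i + 1 := by rw [immSuc_lvl c.hT hts, hslvl]
    have h1 : lvl c.T t ≤ c.ℓ (i + 1) := by
      have := c.hmono i (i + 1) (Nat.lt_succ_self i) hi
      omega
    obtain ⟨hx1, hx2, hx3⟩ := c.pick_spec htT h1 (c.l_lt_k hi)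
    exact ⟨hx1, hx3, hm₀s.trans (hts.2.2.1.le.trans hx2)⟩

lemma slev_struct (c : Ctx α) {i : ℕ} (hi : i + 1 < c.n) {x : α} (hx : x ∈ Slev c (i + 1)) :
    ∃ s ∈ Slev c i, ∃ t, ImmSuc c.T s t ∧ x = pick c.T c.F' (c.ℓ (i + 1)) t ∧
      t ≤ x ∧ lvl c.T t = c.ℓ i + 1 ∧ s < x := by
  obtain ⟨s, hs, t, hts, rfl⟩ := hx
  obtain ⟨hsT, hslvl, _⟩ := c.slev_basic i (Nat.lt_of_succ_lt hi) s hs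
  have htT : t ∈ c.T := hts.2.1
  have htlvl : lvl c.T t = c.ℓ i + 1 := by rw [immSuc_lvl c.hT hts, hslvl]
  have h1 : lvl c.T t ≤ c.ℓ (i + 1) := by
    have := c.hmono i (i + 1) (Nat.lt_succ_self i) hi
    omega
  obtain ⟨hx1, hx2, hx3⟩ := c.pick_spec htT h1 (c.l_lt_k hi)
  exact ⟨s, hs, t, hts, rfl, hx2, htlvl, lt_of_lt_of_le hts.2.2.1 hx2⟩

lemma slev_proj (c : Ctx α) : ∀ i, i < c.n → ∀ x ∈ Slev c i, ∀ j ≤ i,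
    proj c.T x (c.ℓ j) ∈ Slev c j := by
  intro i
  induction i with
  | zero =>
    intro _ x hx j hj
    interval_cases j
    rcases hx with rfl
    have : c.m₀ = proj c.T c.m₀ (c.ℓ 0) :=
      eq_proj c.hT (c.hFT c.hm₀) (c.hFT c.hm₀) le_rfl c.l0.symm
    rw [← this]
    rfl
  | succ i ih =>
    intro hi x hx j hj
    obtain ⟨hxT, hxlvl, _⟩ := c.slev_basic (i + 1) hi x hx
    rcases Nat.lt_succ_iff_lt_or_eq.mp (Nat.lt_succ_of_le hj) with hj' | rfl
    · obtain ⟨s, hs, t, hts, _, htx, _, hsx⟩ := c.slev_struct hi hx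
      obtain ⟨hsT, hslvl, _⟩ := c.slev_basic i (Nat.lt_of_succ_lt hi) s hs
      have hjlvl : c.ℓ j ≤ lvl c.T s := hslvl ▸ c.mono_le (Nat.lt_succ_iff.mp hj') (Nat.lt_of_succ_lt hi)
      obtain ⟨hp1, hp2, hp3⟩ := proj_spec c.hT hsT hjlvl
      have : proj c.T s (c.ℓ j) = proj c.T x (c.ℓ j) :=
        eq_proj c.hT hxT hp1 (hp2.trans hsx.le) hp3
      rw [← this]
      exact ih (Nat.lt_of_succ_lt hi) s hs j (Nat.lt_succ_iff.mp hj')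
    · have : x = proj c.T x (c.ℓ (i + 1)) := eq_proj c.hT hxT hxT le_rfl hxlvl
      rw [← this]
      exact hx

end Ctx

def SS (c : Ctx α) : Set α := {x | ∃ i, i < c.n ∧ x ∈ Slev c i}

namespace Ctx

lemma ss_sub (c : Ctx α) : SS c ⊆ c.T := by
  rintro x ⟨i, hi, hx⟩
  exact (c.slev_basic i hi x hx).1

lemma idx_eq (c : Ctx α) {i j : ℕ} (hi : i < c.n) (hj : j < c.n) {x : α}
    (hxi : x ∈ Slev c i) (hxj : x ∈ Slev c j) : i = j := by
  have h1 := (c.slev_basic i hi x hxi).2.1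
  have h2 := (c.slev_basic j hj x hxj).2.1
  exact c.idx_inj hi hj (h1 ▸ h2 ▸ rfl)

lemma spred (c : Ctx α) {i : ℕ} (hi : i < c.n) {x : α} (hx : x ∈ Slev c i) :
    {y ∈ SS c | y < x} = (fun j => proj c.T x (c.ℓ j)) '' ↑(Finset.range i) := by
  obtain ⟨hxT, hxlvl, _⟩ := c.slev_basic i hi x hx
  ext y
  simp only [Set.mem_setOf_eq, Set.mem_image, Finset.coe_range, Set.mem_Iio]
  constructor
  · rintro ⟨⟨j, hj, hyj⟩, hyx⟩
    obtain ⟨hyT, hylvl, _⟩ := c.slev_basic j hj y hyj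
    have hji : j < i := by
      refine c.idx_lt hj hi ?_
      rw [← hylvl, ← hxlvl]
      exact lvl_lt_lvl c.hT hyT hxT hyx
    exact ⟨j, hji, (eq_proj c.hT hxT hyT hyx.le hylvl).symm⟩
  · rintro ⟨j, hj, rfl⟩
    have hjn : j < c.n := hj.trans hi
    have hjlvl : c.ℓ j ≤ lvl c.T x := hxlvl ▸ c.mono_le hj.le hi
    obtain ⟨hp1, hp2, hp3⟩ := proj_spec c.hT hxT hjlvl
    have hpx : proj c.T x (c.ℓ j) < x := by
      refine lt_of_le_of_ne hp2 (fun hh => ?_)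
      rw [hh] at hp3
      have := c.hmono j i hj hi
      omega
    exact ⟨⟨j, hjn, c.slev_proj i hi x hx j hj.le⟩, hpx⟩

lemma lvl_ss (c : Ctx α) {i : ℕ} (hi : i < c.n) {x : α} (hx : x ∈ Slev c i) :
    lvl (SS c) x = i := by
  obtain ⟨hxT, hxlvl, _⟩ := c.slev_basic i hi x hx
  rw [lvl, c.spred hi hx]
  have hinj : Set.InjOn (fun j => proj c.T x (c.ℓ j)) ↑(Finset.range i) := by
    intro a ha b hb hab
    simp only [Finset.coe_range, Set.mem_Iio] at ha hb
    have hal : c.ℓ a ≤ lvl c.T x := hxlvl ▸ c.mono_le ha.le hi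
    have hbl : c.ℓ b ≤ lvl c.T x := hxlvl ▸ c.mono_le hb.le hi
    have h1 := (proj_spec c.hT hxT hal).2.2
    have h2 := (proj_spec c.hT hxT hbl).2.2
    simp only at hab
    rw [hab] at h1
    exact c.idx_inj (ha.trans hi) (hb.trans hi) (by omega)
  rw [Set.ncard_image_of_injOn hinj, Set.ncard_coe_finset, Finset.card_range]

lemma fmem (c : Ctx α) : ∀ i, i < c.n → ∀ z ∈ c.F', c.ℓ i ≤ lvl c.T z →
    proj c.T z (c.ℓ i) ∈ Slev c i := by
  intro i
  induction i with
  | zero =>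
    intro _ z hz _
    have : c.m₀ = proj c.T z (c.ℓ 0) :=
      eq_proj c.hT (c.hFT hz) (c.hFT c.hm₀) (c.hm₀min z hz) c.l0.symm
    rw [← this]
    rfl
  | succ i ih =>
    intro hi z hz hlz
    have hzT : z ∈ c.T := c.hFT hz
    have hmono := c.hmono i (i + 1) (Nat.lt_succ_self i) hi
    have hli : c.ℓ i ≤ lvl c.T z := by omega
    have hli1 : c.ℓ i + 1 ≤ lvl c.T z := by omega
    have hs : proj c.T z (c.ℓ i) ∈ Slev c i := ih (Nat.lt_of_succ_lt hi) z hz hli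
    obtain ⟨hs1, hs2, hs3⟩ := proj_spec c.hT hzT hli
    obtain ⟨ht1, ht2, ht3⟩ := proj_spec c.hT hzT hli1
    have hst : proj c.T z (c.ℓ i) < proj c.T z (c.ℓ i + 1) := by
      rcases comparable_of_le_le c.hT hs1 ht1 hzT hs2 ht2 with h' | h'
      · exact lt_of_le_of_ne h' (fun hh => by rw [hh] at hs3; omega)
      · exfalso
        have := lvl_le_lvl c.hT ht1 hs1 h'
        omega
    have hts : ImmSuc c.T (proj c.T z (c.ℓ i)) (proj c.T z (c.ℓ i + 1)) :=
      immSuc_of_lvl c.hT hs1 ht1 hst (by omega)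
    have hpick : pick c.T c.F' (c.ℓ (i + 1)) (proj c.T z (c.ℓ i + 1)) =
        proj c.T z (c.ℓ (i + 1)) := c.pick_eq_proj hi ht1 (by omega) hz ht2 hlz
    exact ⟨_, hs, _, hts, hpick.symm⟩

lemma f_sub_ss (c : Ctx α) : c.F' ⊆ SS c := by
  intro z hz
  obtain ⟨i, hi, hil⟩ := c.hlvl' z hz
  have : z = proj c.T z (c.ℓ i) := eq_proj c.hT (c.hFT hz) (c.hFT hz) le_rfl hil.symm
  exact ⟨i, hi, this ▸ c.fmem i hi z hz hil.le⟩

end Ctx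

namespace Ctx

lemma ss_nonempty (c : Ctx α) : (SS c).Nonempty := ⟨c.m₀, 0, c.hn, rfl⟩

lemma ss_rooted (c : Ctx α) : UniquelyRooted (SS c) := by
  refine ⟨c.m₀, ⟨0, c.hn, rfl⟩, ?_⟩
  rintro x ⟨i, hi, hxi⟩
  exact (c.slev_basic i hi x hxi).2.2

lemma ss_aligned (c : Ctx α) : LevelsAligned c.T (SS c) := by
  rintro x ⟨i, hi, hxi⟩ y ⟨j, hj, hyj⟩ hxy
  rw [c.lvl_ss hi hxi, c.lvl_ss hj hyj] at hxy
  subst hxy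
  rw [(c.slev_basic i hi x hxi).2.1, (c.slev_basic i hj y hyj).2.1]

lemma ss_succCond (c : Ctx α) : SuccCond c.T (SS c) := by
  rintro s hsS hex t hts
  obtain ⟨i, hi, hsi⟩ := hsS
  obtain ⟨hsT, hslvl, _⟩ := c.slev_basic i hi s hsi
  obtain ⟨x, ⟨j, hj, hxj⟩, hsx⟩ := hex
  obtain ⟨hxT, hxlvl, _⟩ := c.slev_basic j hj x hxj
  have hij : i < j := c.idx_lt hi hj (by
    rw [← hslvl, ← hxlvl]; exact lvl_lt_lvl c.hT hsT hxT hsx)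
  have hi1 : i + 1 < c.n := by omega
  have htT : t ∈ c.T := hts.2.1
  have htlvl : lvl c.T t = c.ℓ i + 1 := by rw [immSuc_lvl c.hT hts, hslvl]
  have hmono := c.hmono i (i + 1) (Nat.lt_succ_self i) hi1
  obtain ⟨hp1, hp2, hp3⟩ := c.pick_spec htT (by omega) (c.l_lt_k hi1)
  have hs' : pick c.T c.F' (c.ℓ (i + 1)) t ∈ Slev c (i + 1) := ⟨s, hsi, t, hts, rfl⟩
  refine ⟨pick c.T c.F' (c.ℓ (i + 1)) t, ⟨⟨⟨i, hi, hsi⟩, ⟨i + 1, hi1, hs'⟩,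
    hts.2.2.1.trans_le hp2, ?_⟩, hp2⟩, ?_⟩
  · rintro ⟨u, ⟨j', hj', huj⟩, hsu, hus'⟩
    obtain ⟨huT, hulvl, _⟩ := c.slev_basic j' hj' u huj
    have h1 : i < j' := c.idx_lt hi hj' (by
      rw [← hslvl, ← hulvl]; exact lvl_lt_lvl c.hT hsT huT hsu)
    have h2 : j' < i + 1 := c.idx_lt hj' hi1 (by
      rw [← hulvl, ← hp3]; exact lvl_lt_lvl c.hT huT hp1 hus')
    omega
  · rintro s'' ⟨⟨_, ⟨j'', hj'', hs''j⟩, hss'', hno⟩, hts''⟩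
    obtain ⟨hs''T, hs''lvl, _⟩ := c.slev_basic j'' hj'' s'' hs''j
    have h1 : i < j'' := c.idx_lt hi hj'' (by
      rw [← hslvl, ← hs''lvl]; exact lvl_lt_lvl c.hT hsT hs''T hss'')
    have hj''eq : j'' = i + 1 := by
      by_contra hne
      have hi1j : i + 1 < j'' := by omega
      have hple : c.ℓ (i + 1) ≤ lvl c.T s'' := hs''lvl ▸ c.mono_le (by omega) hj''
      obtain ⟨hq1, hq2, hq3⟩ := proj_spec c.hT hs''T hple
      have hpmem : proj c.T s'' (c.ℓ (i + 1)) ∈ Slev c (i + 1) :=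
        c.slev_proj j'' hj'' s'' hs''j (i + 1) (by omega)
      have hsp : s < proj c.T s'' (c.ℓ (i + 1)) := by
        rcases comparable_of_le_le c.hT hsT hq1 hs''T hss''.le hq2 with h' | h'
        · exact lt_of_le_of_ne h' (fun hh => by rw [← hh] at hq3; omega)
        · exfalso
          have := lvl_le_lvl c.hT hq1 hsT h'
          omega
      have hps : proj c.T s'' (c.ℓ (i + 1)) < s'' := by
        refine lt_of_le_of_ne hq2 (fun hh => ?_)
        rw [hh] at hq3
        have := c.hmono (i + 1) j'' hi1j hj''
        omega
      exact hno ⟨_, ⟨i + 1, hi1, hpmem⟩, hsp, hps⟩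
    subst hj''eq
    obtain ⟨sb, hsb, tb, htsb, heq, htbx, htblvl, hsbx⟩ := c.slev_struct hj'' hs''j
    obtain ⟨hsbT, hsblvl, _⟩ := c.slev_basic i (by omega) sb hsb
    have htname : tb = t := by
      refine uniq_at_lvl c.hT htsb.2.1 htT hs''T htbx hts'' ?_
      rw [htblvl, htlvl]
    rw [heq, htname]

lemma ss_balanced (c : Ctx α) : BalancedOfHeight (SS c) c.n := by
  intro C hC
  have hCT : C ⊆ c.T := hC.1.trans c.ss_sub
  have hinj : Set.InjOn (lvl c.T) C := by
    intro x hx y hy hxy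
    rcases eq_or_ne x y with rfl | hne
    · rfl
    rcases hC.2.1 hx hy hne with h | h
    · exact eq_of_le_of_lvl_le c.hT (hCT hx) (hCT hy) h hxy.ge
    · exact (eq_of_le_of_lvl_le c.hT (hCT hy) (hCT hx) h hxy.le).symm
  have hfin : C.Finite := by
    refine Set.Finite.of_finite_image (((Finset.range c.k).finite_toSet).subset ?_) hinj
    rintro j ⟨u, hu, rfl⟩
    simp [lvl_lt_height c.hT c.hbal (hCT hu)]
  have hCne : C.Nonempty := by
    by_contra h
    rw [Set.not_nonempty_iff_eq_empty] at h
    have := hC.2.2 {c.m₀} (h ▸ Set.empty_subset _)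
      (Set.singleton_subset_iff.mpr ⟨0, c.hn, rfl⟩) Set.subsingleton_singleton.isChain
    rw [h] at this
    exact absurd this (by simp)
  obtain ⟨x, hxC, hxmax⟩ := chain_max hfin hCne hC.2.1
  obtain ⟨i, hi, hxi⟩ := hC.1 hxC
  obtain ⟨hxT, hxlvl, _⟩ := c.slev_basic i hi x hxi
  have hin : ¬(i + 1 < c.n) := by
    intro hi1
    have hmono := c.hmono i (i + 1) (Nat.lt_succ_self i) hi1
    have hlk := c.l_lt_k hi1
    obtain ⟨t, htT, hxt, htlvl⟩ := exists_ge_lvl c.hT c.hbal hxT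
      (show lvl c.T x ≤ c.ℓ i + 1 by omega) (by omega)
    have hxt' : x < t := lt_of_le_of_ne hxt (fun hh => by rw [← hh] at htlvl; omega)
    have hImm : ImmSuc c.T x t := immSuc_of_lvl c.hT hxT htT hxt' (by omega)
    obtain ⟨hp1, hp2, hp3⟩ := c.pick_spec htT (by omega) hlk
    have hs' : pick c.T c.F' (c.ℓ (i + 1)) t ∈ Slev c (i + 1) := ⟨x, hxi, t, hImm, rfl⟩
    have hxs' : x < pick c.T c.F' (c.ℓ (i + 1)) t := hxt'.trans_le hp2
    have hchain' : IsChain (· ≤ ·) (insert (pick c.T c.F' (c.ℓ (i + 1)) t) C) := by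
      refine hC.2.1.insert (fun b hb _ => Or.inr ((hxmax b hb).trans hxs'.le))
    have := hC.2.2 _ (Set.subset_insert _ _)
      (Set.insert_subset ⟨i + 1, hi1, hs'⟩ hC.1) hchain'
    have hmem : pick c.T c.F' (c.ℓ (i + 1)) t ∈ C := this ▸ Set.mem_insert _ _
    exact absurd (hxs'.trans_le (hxmax _ hmem)) (lt_irrefl x)
  have hji : ∀ j, j < c.n → j ≤ i := by
    intro j hj
    by_contra h
    exact hin (by omega)
  set P := (fun j => proj c.T x (c.ℓ j)) '' ↑(Finset.range c.n) with hP
  have hprojle : ∀ j, j < c.n → proj c.T x (c.ℓ j) ≤ x ∧ proj c.T x (c.ℓ j) ∈ c.T ∧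
      lvl c.T (proj c.T x (c.ℓ j)) = c.ℓ j := by
    intro j hj
    have := proj_spec c.hT hxT (show c.ℓ j ≤ lvl c.T x from hxlvl ▸ c.mono_le (hji j hj) hi)
    exact ⟨this.2.1, this.1, this.2.2⟩
  have hPS : P ⊆ SS c := by
    rintro p ⟨j, hj, rfl⟩
    simp only [Finset.coe_range, Set.mem_Iio] at hj
    exact ⟨j, hj, c.slev_proj i hi x hxi j (hji j hj)⟩
  have hPC : C = P := by
    have hchain' : IsChain (· ≤ ·) (C ∪ P) := by
      intro u hu v hv hne
      have hle : ∀ w, w ∈ C ∪ P → w ≤ x := by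
        rintro w (hw | ⟨j, hj, rfl⟩)
        · exact hxmax w hw
        · exact (hprojle j (by simpa using hj)).1
      have hwt : ∀ w, w ∈ C ∪ P → w ∈ c.T := by
        rintro w (hw | ⟨j, hj, rfl⟩)
        · exact hCT hw
        · exact (hprojle j (by simpa using hj)).2.1
      exact comparable_of_le_le c.hT (hwt u hu) (hwt v hv) hxT (hle u hu) (hle v hv)
    have := hC.2.2 (C ∪ P) Set.subset_union_left (Set.union_subset hC.1 hPS) hchain'
    refine Set.Subset.antisymm ?_ (by rw [← this]; exact Set.subset_union_right)
    intro y hy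
    obtain ⟨j, hj, hyj⟩ := hC.1 hy
    obtain ⟨hyT, hylvl, _⟩ := c.slev_basic j hj y hyj
    have hyx : y ≤ x := hxmax y hy
    exact ⟨j, by simpa using hj, (eq_proj c.hT hxT hyT hyx hylvl).symm⟩
  have hPinj : Set.InjOn (fun j => proj c.T x (c.ℓ j)) ↑(Finset.range c.n) := by
    intro a ha b hb hab
    simp only [Finset.coe_range, Set.mem_Iio] at ha hb
    have h1 := (hprojle a ha).2.2
    have h2 := (hprojle b hb).2.2
    simp only at hab
    rw [hab] at h1
    exact c.idx_inj ha hb (by omega)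
  have hPcard : P.ncard = c.n := by
    rw [hP, Set.ncard_image_of_injOn hPinj, Set.ncard_coe_finset, Finset.card_range]
  exact ⟨hfin, by rw [hPC, hPcard]⟩

lemma ss_strong (c : Ctx α) : IsStrongSubtreeFin c.T (SS c) c.n :=
  ⟨c.ss_sub, c.ss_nonempty, c.ss_rooted, c.ss_balanced, c.ss_aligned, c.ss_succCond⟩

end Ctx

lemma tmeet_le_of_lvl_le {T : Set α} (hT : IsTreeSet T) (hroot : UniquelyRooted T)
    {a b e : α} (ha : a ∈ T) (hb : b ∈ T) (he : e ∈ T)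
    (h : lvl T (tmeet T a b) ≤ lvl T (tmeet T a e)) : tmeet T a b ≤ e := by
  obtain ⟨h1, h2, h3, h4⟩ := tmeet_spec hT hroot ha hb
  obtain ⟨g1, g2, g3, g4⟩ := tmeet_spec hT hroot ha he
  rcases comparable_of_le_le hT h1 g1 ha h2 g2 with h' | h'
  · exact h'.trans g3
  · exact (eq_of_le_of_lvl_le hT g1 h1 h' h).symm ▸ g3

lemma tmeet_four {T : Set α} (hT : IsTreeSet T) (hroot : UniquelyRooted T)
    {a b d e : α} (ha : a ∈ T) (hb : b ∈ T) (hd : d ∈ T) (he : e ∈ T) :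
    ∃ x ∈ ({a, b, d, e} : Set α), ∃ y ∈ ({a, b, d, e} : Set α),
      tmeet T (tmeet T a b) (tmeet T d e) = tmeet T x y := by
  classical
  set s : Finset α := {a, b, d, e} with hs
  have hsT : ∀ w ∈ s, w ∈ T := by
    intro w hw
    simp only [hs, Finset.mem_insert, Finset.mem_singleton] at hw
    rcases hw with rfl | rfl | rfl | rfl <;> assumption
  set P := Finset.image₂ (tmeet T) s s with hPdef
  have hPne : P.Nonempty := by
    refine ⟨tmeet T a a, Finset.mem_image₂.mpr ⟨a, ?_, a, ?_, rfl⟩⟩ <;> simp [hs]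
  obtain ⟨w, hwP, hwmin⟩ := P.exists_min_image (lvl T) hPne
  obtain ⟨x, hx, y, hy, hwxy⟩ := Finset.mem_image₂.mp hwP
  have hle : ∀ f ∈ s, tmeet T x y ≤ f := by
    intro f hf
    refine tmeet_le_of_lvl_le hT hroot (hsT x hx) (hsT y hy) (hsT f hf) ?_
    rw [hwxy]
    exact hwmin _ (Finset.mem_image₂.mpr ⟨x, hx, f, hf, rfl⟩)
  obtain ⟨mab1, mab2, mab3, mab4⟩ := tmeet_spec hT hroot ha hb
  obtain ⟨mde1, mde2, mde3, mde4⟩ := tmeet_spec hT hroot hd he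
  obtain ⟨M1, M2, M3, M4⟩ := tmeet_spec hT hroot mab1 mde1
  obtain ⟨w1, w2, w3, w4⟩ := tmeet_spec hT hroot (hsT x hx) (hsT y hy)
  have hwM : tmeet T x y ≤ tmeet T (tmeet T a b) (tmeet T d e) := by
    refine M4 _ w1 ?_ ?_
    · exact mab4 _ w1 (hle a (by simp [hs])) (hle b (by simp [hs]))
    · exact mde4 _ w1 (hle d (by simp [hs])) (hle e (by simp [hs]))
  have hMf : ∀ f ∈ s, tmeet T (tmeet T a b) (tmeet T d e) ≤ f := by
    intro f hf
    simp only [hs, Finset.mem_insert, Finset.mem_singleton] at hf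
    rcases hf with rfl | rfl | rfl | rfl
    · exact M2.trans mab2
    · exact M2.trans mab3
    · exact M3.trans mde2
    · exact M3.trans mde3
  have hMw : tmeet T (tmeet T a b) (tmeet T d e) ≤ tmeet T x y :=
    w4 _ M1 (hMf x hx) (hMf y hy)
  have hmem : ∀ f ∈ s, f ∈ ({a, b, d, e} : Set α) := by
    intro f hf
    simp only [hs, Finset.mem_insert, Finset.mem_singleton] at hf
    simp only [Set.mem_insert_iff, Set.mem_singleton_iff]
    tauto
  exact ⟨x, hmem x hx, y, hmem y hy, le_antisymm hMw hwM⟩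

open Classical in
lemma lvlclos_card {T : Set α} (hT : IsTreeSet T) (hroot : UniquelyRooted T) :
    ∀ (G : Finset α), G.Nonempty → ↑G ⊆ T →
      ((Finset.image₂ (tmeet T) G G).image (lvl T)).card ≤ 2 * G.card - 1 := by
  intro G hGne
  induction hGne using Finset.Nonempty.cons_induction with
  | singleton a =>
    intro hsub
    have haT : a ∈ T := hsub (by simp)
    rw [Finset.image₂_singleton, tmeet_self hT hroot haT]
    simp
  | cons a s h hs ih =>
    intro hsub
    have haT : a ∈ T := hsub (by simp)
    have hsT : ↑s ⊆ T := fun w hw => hsub (by simp [hw])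
    obtain ⟨y₀, hy₀, hy₀max⟩ := s.exists_max_image (fun y => lvl T (tmeet T a y)) hs
    have hy₀T : y₀ ∈ T := hsT hy₀
    have key : ∀ y ∈ s, tmeet T a y = tmeet T a y₀ ∨ tmeet T a y = tmeet T y₀ y := by
      intro y hy
      have hyT : y ∈ T := hsT hy
      obtain ⟨w1, w2, w3, w4⟩ := tmeet_spec hT hroot haT hy₀T
      obtain ⟨v1, v2, v3, v4⟩ := tmeet_spec hT hroot haT hyT
      obtain ⟨u1, u2, u3, u4⟩ := tmeet_spec hT hroot hy₀T hyT
      have hvw : tmeet T a y ≤ tmeet T a y₀ := by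
        rcases comparable_of_le_le hT v1 w1 haT v2 w2 with h' | h'
        · exact h'
        · exact (eq_of_le_of_lvl_le hT w1 v1 h' (hy₀max y hy)).symm.le
      by_cases heq : tmeet T a y = tmeet T a y₀
      · exact Or.inl heq
      right
      have hlt : tmeet T a y < tmeet T a y₀ := lt_of_le_of_ne hvw heq
      refine le_antisymm ?_ ?_
      · exact u4 _ v1 (hvw.trans w3) v3
      · rcases comparable_of_le_le hT u1 w1 hy₀T u2 w3 with h' | h'
        · exact v4 _ u1 (h'.trans w2) u3
        · exfalso
          have : tmeet T a y₀ ≤ tmeet T a y := v4 _ w1 w2 (h'.trans u3)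
          exact absurd (hlt.trans_le this) (lt_irrefl _)
    have hsubset : (Finset.image₂ (tmeet T) (Finset.cons a s h) (Finset.cons a s h)).image (lvl T) ⊆
        insert (lvl T a) (insert (lvl T (tmeet T a y₀))
          ((Finset.image₂ (tmeet T) s s).image (lvl T))) := by
      intro q hq
      obtain ⟨w, hwmem, rfl⟩ := Finset.mem_image.mp hq
      obtain ⟨u, hu, v, hv, rfl⟩ := Finset.mem_image₂.mp hwmem
      rw [Finset.mem_cons] at hu hv
      have inimg : ∀ u' ∈ s, ∀ v' ∈ s,
          lvl T (tmeet T u' v') ∈ (Finset.image₂ (tmeet T) s s).image (lvl T) :=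
        fun u' hu' v' hv' => Finset.mem_image.mpr ⟨_, Finset.mem_image₂.mpr ⟨u', hu', v', hv', rfl⟩, rfl⟩
      rcases hu with rfl | hu <;> rcases hv with rfl | hv
      · rw [tmeet_self hT hroot haT]
        simp
      · rcases key v hv with heq | heq <;> rw [heq]
        · simp
        · simp only [Finset.mem_insert]
          exact Or.inr (Or.inr (inimg y₀ hy₀ v hv))
      · rw [tmeet_comm hT hroot (hsT hu) haT]
        rcases key u hu with heq | heq <;> rw [heq]
        · simp
        · simp only [Finset.mem_insert]
          exact Or.inr (Or.inr (inimg y₀ hy₀ u hu))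
      · simp only [Finset.mem_insert]
        exact Or.inr (Or.inr (inimg u hu v hv))
    have hcard := Finset.card_le_card hsubset
    have h1 := Finset.card_insert_le (lvl T a) (insert (lvl T (tmeet T a y₀))
      ((Finset.image₂ (tmeet T) s s).image (lvl T)))
    have h2 := Finset.card_insert_le (lvl T (tmeet T a y₀))
      ((Finset.image₂ (tmeet T) s s).image (lvl T))
    have h3 := ih hsT
    have h4 : 0 < s.card := Finset.card_pos.mpr hs
    rw [Finset.card_cons]
    omega

end StrongTreeAux


theorem stmt8 {α : Type*} [PartialOrder α] (k : ℕ) (hk : 1 ≤ k)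
    (T : Set α) (hT : IsTreeSet T) (hroot : UniquelyRooted T)
    (hbal : BalancedOfHeight T k)
    (F : Set α) (hFT : F ⊆ T) (hFne : F.Nonempty) (hFfin : F.Finite) :
    ∃ (S : Set α) (h : ℕ), IsStrongSubtreeFin T S h ∧ F ⊆ S ∧
      h ≤ min k (2 * F.ncard - 1) := by
  classical
  obtain ⟨G, hGcoe⟩ : ∃ G : Finset α, ↑G = F := ⟨hFfin.toFinset, hFfin.coe_toFinset⟩
  have hGne : G.Nonempty := by
    rw [← Finset.coe_nonempty, hGcoe]; exact hFne
  have hGT : ↑G ⊆ T := hGcoe ▸ hFT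
  set F' : Set α := ↑(Finset.image₂ (StrongTreeAux.tmeet T) G G) with hF'def
  have hF'T : F' ⊆ T := by
    rintro z hz
    obtain ⟨x, hx, y, hy, rfl⟩ := Finset.mem_image₂.mp hz
    exact (StrongTreeAux.tmeet_spec hT hroot (hGT hx) (hGT hy)).1
  have hFF' : F ⊆ F' := by
    intro z hz
    have hzG : z ∈ G := by rw [← hGcoe] at hz; exact hz
    have : StrongTreeAux.tmeet T z z = z := StrongTreeAux.tmeet_self hT hroot (hFT hz)
    exact Finset.mem_coe.mpr (Finset.mem_image₂.mpr ⟨z, hzG, z, hzG, this⟩)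
  have hclos : ∀ z₁ ∈ F', ∀ z₂ ∈ F', StrongTreeAux.tmeet T z₁ z₂ ∈ F' := by
    intro z₁ hz₁ z₂ hz₂
    obtain ⟨a, haG, b, hbG, rfl⟩ := Finset.mem_image₂.mp hz₁
    obtain ⟨d, hdG, e, heG, rfl⟩ := Finset.mem_image₂.mp hz₂
    obtain ⟨x, hx, y, hy, heq⟩ := StrongTreeAux.tmeet_four hT hroot
      (hGT haG) (hGT hbG) (hGT hdG) (hGT heG)
    have hxG : x ∈ G := by
      simp only [Set.mem_insert_iff, Set.mem_singleton_iff] at hx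
      rcases hx with rfl | rfl | rfl | rfl <;> assumption
    have hyG : y ∈ G := by
      simp only [Set.mem_insert_iff, Set.mem_singleton_iff] at hy
      rcases hy with rfl | rfl | rfl | rfl <;> assumption
    rw [heq]
    exact Finset.mem_coe.mpr (Finset.mem_image₂.mpr ⟨x, hxG, y, hyG, rfl⟩)
  set Λ : Finset ℕ := (Finset.image₂ (StrongTreeAux.tmeet T) G G).image (lvl T) with hΛdef
  set n : ℕ := Λ.card with hndef
  have hΛne : Λ.Nonempty := Finset.Nonempty.image (Finset.Nonempty.image₂ hGne hGne) _
  have hn : 0 < n := Finset.card_pos.mpr hΛne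
  obtain ⟨m₀, hm₀mem, hm₀minlvl⟩ :=
    (Finset.image₂ (StrongTreeAux.tmeet T) G G).exists_min_image (lvl T)
      (Finset.Nonempty.image₂ hGne hGne)
  have hm₀ : m₀ ∈ F' := Finset.mem_coe.mpr hm₀mem
  have hm₀min : ∀ z ∈ F', m₀ ≤ z := by
    intro z hz
    obtain ⟨w1, w2, w3, w4⟩ := StrongTreeAux.tmeet_spec hT hroot (hF'T hm₀) (hF'T hz)
    have hwF : StrongTreeAux.tmeet T m₀ z ∈ F' := hclos m₀ hm₀ z hz
    have hwlvl : lvl T m₀ ≤ lvl T (StrongTreeAux.tmeet T m₀ z) := hm₀minlvl _ hwF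
    have : StrongTreeAux.tmeet T m₀ z = m₀ :=
      StrongTreeAux.eq_of_le_of_lvl_le hT w1 (hF'T hm₀) w2 hwlvl
    rw [← this]
    exact w3
  set e : Fin n ↪o ℕ := Λ.orderEmbOfFin hndef.symm with hedef
  set ℓ : ℕ → ℕ := fun i => if h : i < n then e ⟨i, h⟩ else 0 with hℓdef
  have hmono : ∀ i j, i < j → j < n → ℓ i < ℓ j := by
    intro i j hij hj
    have hi : i < n := hij.trans hj
    simp only [hℓdef, dif_pos hi, dif_pos hj]
    exact e.strictMono (show (⟨i, hi⟩ : Fin n) < ⟨j, hj⟩ from hij)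
  have hΛF' : ∀ q ∈ Λ, ∃ z ∈ F', lvl T z = q := by
    intro q hq
    obtain ⟨w, hw, rfl⟩ := Finset.mem_image.mp hq
    exact ⟨w, Finset.mem_coe.mpr hw, rfl⟩
  have hlvl : ∀ i < n, ∃ z ∈ F', lvl T z = ℓ i := by
    intro i hi
    have : ℓ i ∈ Λ := by
      simp only [hℓdef, dif_pos hi]
      exact Λ.orderEmbOfFin_mem hndef.symm ⟨i, hi⟩
    exact hΛF' _ this
  have hlvl' : ∀ z ∈ F', ∃ i < n, ℓ i = lvl T z := by
    intro z hz
    have hzΛ : lvl T z ∈ Λ := Finset.mem_image.mpr ⟨z, hz, rfl⟩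
    have : lvl T z ∈ Set.range ⇑e := by
      rw [hedef, Finset.range_orderEmbOfFin]
      exact hzΛ
    obtain ⟨i, hi⟩ := this
    exact ⟨i.1, i.2, by simp only [hℓdef, dif_pos i.2]; rw [← hi]⟩
  set c : StrongTreeAux.Ctx α :=
    ⟨T, k, F', m₀, n, ℓ, hT, hroot, hbal, hF'T, hm₀, hm₀min, hclos, hn, hmono, hlvl, hlvl'⟩
    with hcdef
  refine ⟨StrongTreeAux.SS c, n, c.ss_strong, hFF'.trans c.f_sub_ss, le_min ?_ ?_⟩
  · have hsub : Λ ⊆ Finset.range k := by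
      intro q hq
      obtain ⟨z, hz, rfl⟩ := hΛF' q hq
      simp only [Finset.mem_range]
      exact StrongTreeAux.lvl_lt_height hT hbal (hF'T hz)
    have := Finset.card_le_card hsub
    rw [Finset.card_range] at this
    exact this
  · have h1 := StrongTreeAux.lvlclos_card hT hroot G hGne hGT
    have h2 : F.ncard = G.card := by rw [← hGcoe, Set.ncard_coe_finset]
    rw [h2]
    exact h1
end
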